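/- Let 1 < q < ∞, let 1 ≤ p ≤ q, let q' = q/(q−1), and let c be defined by 1/c = 1/p + 1/q'. Let ρ be a bipartite distribution on U × V that is q-to-p hypercontractive. Then for every integer n ≥ 1, col_ρ(n, 1/n) ≥ ((p^{1/p} · q'^{1/q'})^c / (2c)) · n^{1−c}. -/

import Mathlib

open scoped BigOperators ENNReal

namespace SR

variable {U V X Y : Type*}

/-- `μ` is a probability distribution on a finite type. -/
def IsDist {α : Type*} [Fintype α] (μ : α → ℝ) : Prop :=
  (∀ a, 0 ≤ μ a) ∧ ∑ a, μ a = 1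

/-- Expectation of `f` under `μ`. -/
def expect {α : Type*} [Fintype α] (μ : α → ℝ) (f : α → ℝ) : ℝ :=
  ∑ a, μ a * f a

/-- First (`U`-)marginal of a bipartite distribution. -/
def margFst [Fintype V] (ρ : U × V → ℝ) : U → ℝ :=
  fun u => ∑ v, ρ (u, v)

/-- Second (`V`-)marginal of a bipartite distribution. -/
def margSnd [Fintype U] (ρ : U × V → ℝ) : V → ℝ :=
  fun v => ∑ u, ρ (u, v)

/-- Maximum correlation of a bipartite distribution (sSup of the empty set is 0). -/
noncomputable def cor [Fintype U] [Fintype V] (ρ : U × V → ℝ) : ℝ :=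
  sSup { t : ℝ | ∃ (f : U → ℝ) (g : V → ℝ),
      expect (margFst ρ) f = 0 ∧ expect (margSnd ρ) g = 0 ∧
      expect (margFst ρ) (fun u => f u ^ 2) = 1 ∧
      expect (margSnd ρ) (fun v => g v ^ 2) = 1 ∧
      t = ∑ x : U × V, ρ x * (f x.1 * g x.2) }

/-- Tensor product of two bipartite distributions. -/
def tensor (ρ : U × V → ℝ) (σ : X × Y → ℝ) : (U × X) × (V × Y) → ℝ :=
  fun p => ρ (p.1.1, p.2.1) * σ (p.1.2, p.2.2)

/-- Tensor product of a family of bipartite distributions. -/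
def tensorPi {n : ℕ} {U V : Fin n → Type*} (ρ : ∀ i, U i × V i → ℝ) :
    (∀ i, U i) × (∀ i, V i) → ℝ :=
  fun p => ∏ i, ρ i (p.1 i, p.2 i)

/-- The distribution of `ℓ` i.i.d. samples from a bipartite distribution `ρ`. -/
def iid (ρ : U × V → ℝ) (ℓ : ℕ) : (Fin ℓ → U) × (Fin ℓ → V) → ℝ :=
  fun p => ∏ i, ρ (p.1 i, p.2 i)

/-- Agreement complexity of `ρ` at success probability `p`. -/
noncomputable def agr [Fintype U] [Fintype V] (ρ : U × V → ℝ) (p : ℝ) : ℝ :=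
  sInf { c : ℝ | ∃ (ℓ : ℕ) (f : (Fin ℓ → U) → ℝ) (g : (Fin ℓ → V) → ℝ),
      (∀ x, f x ∈ Set.Icc (0:ℝ) 1) ∧ (∀ y, g y ∈ Set.Icc (0:ℝ) 1) ∧
      p ≤ (∑ x : (Fin ℓ → U) × (Fin ℓ → V), iid ρ ℓ x * (f x.1 * g x.2)) ∧
      c = (∑ x : (Fin ℓ → U) × (Fin ℓ → V), iid ρ ℓ x * f x.1)
        + (∑ x : (Fin ℓ → U) × (Fin ℓ → V), iid ρ ℓ x * g x.2) }

/-- There is a `p`-collision protocol for `ρ` with domain size `n` and output size at most `k`.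
    The players may use private randomness (uniform over `Fin sA`, `Fin sB` weighted by
    distributions `μA`, `μB`, independent of everything else). -/
def ColLE [Fintype U] [Fintype V] (ρ : U × V → ℝ) (n : ℕ) (p : ℝ) (k : ℕ) : Prop :=
  ∃ (ℓ sA sB : ℕ) (μA : Fin sA → ℝ) (μB : Fin sB → ℝ)
    (A : (Fin ℓ → U) → Fin sA → Finset (Fin n))
    (B : (Fin ℓ → V) → Fin sB → Finset (Fin n)),
    IsDist μA ∧ IsDist μB ∧
    (∀ i : Fin n, p ≤ ∑ x : (Fin ℓ → U) × (Fin ℓ → V), ∑ rA, ∑ rB,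
        iid ρ ℓ x * (μA rA * μB rB) *
          (if i ∈ A x.1 rA ∧ i ∈ B x.2 rB then (1:ℝ) else 0)) ∧
    (∀ (x : (Fin ℓ → U) × (Fin ℓ → V)) (rA : Fin sA),
        0 < iid ρ ℓ x → 0 < μA rA → (A x.1 rA).card ≤ k) ∧
    (∀ (x : (Fin ℓ → U) × (Fin ℓ → V)) (rB : Fin sB),
        0 < iid ρ ℓ x → 0 < μB rB → (B x.2 rB).card ≤ k)

/-- Collision complexity `col_ρ(n, p)`, valued in `ℕ∞` (`sInf ∅ = ⊤`). -/
noncomputable def col [Fintype U] [Fintype V] (ρ : U × V → ℝ) (n : ℕ) (p : ℝ) : ℕ∞ :=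
  sInf { k : ℕ∞ | ∃ m : ℕ, k = (m : ℕ∞) ∧ ColLE ρ n p m }

/-- Base-2 Shannon entropy of a finitely supported distribution. -/
noncomputable def ent2 {α : Type*} [Fintype α] (μ : α → ℝ) : ℝ :=
  ∑ a, -(μ a * Real.logb 2 (μ a))

open Classical in
/-- Probability of an event under `μ`. -/
noncomputable def prEvent {Ω : Type*} [Fintype Ω] (μ : Ω → ℝ) (P : Ω → Prop) : ℝ :=
  ∑ ω, if P ω then μ ω else 0

/-- The distribution of a random variable `Z` conditioned on an event `P`. -/
noncomputable def condDist {Ω α : Type*} [Fintype Ω] (μ : Ω → ℝ) (Z : Ω → α)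
    (P : Ω → Prop) : α → ℝ :=
  fun a => prEvent μ (fun ω => Z ω = a ∧ P ω) / prEvent μ P

/-- The `L^r(μ)`-norm of a complex-valued function on a finite probability space. -/
noncomputable def lnorm {α : Type*} [Fintype α] (μ : α → ℝ) (r : ℝ) (h : α → ℂ) : ℝ :=
  (∑ a, μ a * ‖h a‖ ^ r) ^ (1 / r)

/-- The conditional-expectation operator `T_ρ` of a bipartite distribution. -/
noncomputable def condOp [Fintype U] [Fintype V] (ρ : U × V → ℝ) (f : U → ℂ) : V → ℂ :=
  fun v => ∑ u, ((ρ (u, v) / margSnd ρ v : ℝ) : ℂ) * f u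

/-- `ρ` is `q`-to-`p` hypercontractive. -/
def Hyper [Fintype U] [Fintype V] (ρ : U × V → ℝ) (q p : ℝ) : Prop :=
  ∀ f : U → ℂ, lnorm (margSnd ρ) q (condOp ρ f) ≤ lnorm (margFst ρ) p f

/-- Inner product over 𝔽₂. -/
def ipF2 {m : ℕ} (u v : Fin m → ZMod 2) : ZMod 2 := ∑ i, u i * v i

/-- `σ_{m,b}`: uniform distribution on pairs `(u,v) ∈ 𝔽₂^m × 𝔽₂^m` with `u·v = b`. -/
noncomputable def sigmaIP (m : ℕ) (b : ZMod 2) :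
    ((Fin m → ZMod 2) × (Fin m → ZMod 2)) → ℝ :=
  fun p => if ipF2 p.1 p.2 = b then
      (((Finset.univ.filter
        (fun q : (Fin m → ZMod 2) × (Fin m → ZMod 2) => ipF2 q.1 q.2 = b)).card : ℝ))⁻¹
    else 0

/-- `ρ_disj`: uniform distribution on `{(0,0),(0,1),(1,0)} ⊆ {0,1} × {0,1}`
    (with `false = 0`, `true = 1`). -/
noncomputable def rhoDisj : Bool × Bool → ℝ :=
  fun x => if x = (true, true) then 0 else 1/3



section AuxLemmas

lemma rpow_rpow_inv {x : ℝ} (hx : 0 ≤ x) {r : ℝ} (hr : r ≠ 0) :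
    (x ^ r) ^ (1/r) = x := by
  rw [← Real.rpow_mul hx, mul_one_div, div_self hr, Real.rpow_one]

lemma rpow_inv_rpow {x : ℝ} (hx : 0 ≤ x) {r : ℝ} (hr : r ≠ 0) :
    (x ^ (1/r)) ^ r = x := by
  rw [← Real.rpow_mul hx, one_div, inv_mul_cancel₀ hr, Real.rpow_one]

lemma wmul_rpow {w z r : ℝ} (hw : 0 ≤ w) (hz : 0 ≤ z) (hr : r ≠ 0) :
    (w ^ (1/r) * z) ^ r = w * z ^ r := by
  rw [Real.mul_rpow (by positivity) hz, rpow_inv_rpow hw hr]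

/-- Weighted Minkowski inequality for finite sums. -/
lemma minkowski {α β : Type*} [Fintype β] (s : Finset α) (w : β → ℝ) (hw : ∀ y, 0 ≤ w y)
    (H : α → β → ℝ) (hH : ∀ a y, 0 ≤ H a y) {r : ℝ} (hr : 1 ≤ r) :
    (∑ y, w y * (∑ a ∈ s, H a y) ^ r) ^ (1/r) ≤ ∑ a ∈ s, (∑ y, w y * H a y ^ r) ^ (1/r) := by
  have hr0 : r ≠ 0 := by positivity
  induction s using Finset.cons_induction with
  | empty =>
      simp only [Finset.sum_empty, Real.zero_rpow hr0, mul_zero, Finset.sum_const_zero,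
        Real.zero_rpow (one_div_ne_zero hr0), le_refl]
  | cons a s ha ih =>
      simp only [Finset.sum_cons]
      have key : (∑ y, w y * (H a y + ∑ b ∈ s, H b y) ^ r) ^ (1/r)
          ≤ (∑ y, w y * H a y ^ r) ^ (1/r) + (∑ y, w y * (∑ b ∈ s, H b y) ^ r) ^ (1/r) := by
        have h2 := Real.Lp_add_le_of_nonneg (s := (Finset.univ : Finset β))
          (f := fun y => w y ^ (1/r) * H a y)
          (g := fun y => w y ^ (1/r) * (∑ b ∈ s, H b y)) hr
          (fun i _ => by have := hw i; have := hH a i; positivity)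
          (fun i _ => by
            have := hw i
            have : (0:ℝ) ≤ ∑ b ∈ s, H b i := Finset.sum_nonneg fun b _ => hH b i
            positivity)
        have e1 : ∀ y : β, (w y ^ (1/r) * H a y + w y ^ (1/r) * (∑ b ∈ s, H b y)) ^ r
            = w y * (H a y + ∑ b ∈ s, H b y) ^ r := by
          intro y
          rw [← mul_add]
          exact wmul_rpow (hw y)
            (add_nonneg (hH a y) (Finset.sum_nonneg fun b _ => hH b y)) hr0
        have e2 : ∀ y : β, (w y ^ (1/r) * H a y) ^ r = w y * H a y ^ r := fun y =>
          wmul_rpow (hw y) (hH a y) hr0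
        have e3 : ∀ y : β, (w y ^ (1/r) * (∑ b ∈ s, H b y)) ^ r
            = w y * (∑ b ∈ s, H b y) ^ r := fun y =>
          wmul_rpow (hw y) (Finset.sum_nonneg fun b _ => hH b y) hr0
        calc (∑ y, w y * (H a y + ∑ b ∈ s, H b y) ^ r) ^ (1/r)
            = (∑ y, (w y ^ (1/r) * H a y + w y ^ (1/r) * (∑ b ∈ s, H b y)) ^ r) ^ (1/r) := by
              rw [Finset.sum_congr rfl fun y _ => (e1 y)]
          _ ≤ _ := h2
          _ = (∑ y, w y * H a y ^ r) ^ (1/r) + (∑ y, w y * (∑ b ∈ s, H b y) ^ r) ^ (1/r) := by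
              rw [Finset.sum_congr rfl fun y _ => (e2 y), Finset.sum_congr rfl fun y _ => (e3 y)]
      calc (∑ y, w y * (H a y + ∑ b ∈ s, H b y) ^ r) ^ (1/r)
          ≤ (∑ y, w y * H a y ^ r) ^ (1/r) + (∑ y, w y * (∑ b ∈ s, H b y) ^ r) ^ (1/r) := key
        _ ≤ (∑ y, w y * H a y ^ r) ^ (1/r) + ∑ b ∈ s, (∑ y, w y * H b y ^ r) ^ (1/r) := by
              exact add_le_add le_rfl ih


lemma hyper_comap {U V U' V' : Type*} [Fintype U] [Fintype V] [Fintype U'] [Fintype V']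
    (ρ : U × V → ℝ) (e : U' ≃ U) (e2 : V' ≃ V) {q p : ℝ}
    (h : Hyper ρ q p) : Hyper (fun z : U' × V' => ρ (e z.1, e2 z.2)) q p := by
  intro f
  have hm2 : ∀ v', margSnd (fun z : U' × V' => ρ (e z.1, e2 z.2)) v' = margSnd ρ (e2 v') := by
    intro v'
    exact e.sum_comp (fun u => ρ (u, e2 v'))
  have hm1 : ∀ u', margFst (fun z : U' × V' => ρ (e z.1, e2 z.2)) u' = margFst ρ (e u') := by
    intro u'
    exact e2.sum_comp (fun v => ρ (e u', v))
  have hop : ∀ v', condOp (fun z : U' × V' => ρ (e z.1, e2 z.2)) f v'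
      = condOp ρ (fun u => f (e.symm u)) (e2 v') := by
    intro v'
    unfold condOp
    rw [← e.sum_comp (fun u => ((ρ (u, e2 v') / margSnd ρ (e2 v') : ℝ) : ℂ) * f (e.symm u))]
    refine Finset.sum_congr rfl fun u' _ => ?_
    rw [hm2, e.symm_apply_apply]
  have h1 : lnorm (margSnd fun z : U' × V' => ρ (e z.1, e2 z.2)) q
        (condOp (fun z : U' × V' => ρ (e z.1, e2 z.2)) f)
      = lnorm (margSnd ρ) q (condOp ρ (fun u => f (e.symm u))) := by
    unfold lnorm
    congr 1
    rw [← e2.sum_comp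
      (fun v => margSnd ρ v * ‖condOp ρ (fun u => f (e.symm u)) v‖ ^ q)]
    exact Finset.sum_congr rfl fun v' _ => by rw [hm2, hop]
  have h2 : lnorm (margFst fun z : U' × V' => ρ (e z.1, e2 z.2)) p f
      = lnorm (margFst ρ) p (fun u => f (e.symm u)) := by
    unfold lnorm
    congr 1
    rw [← e.sum_comp (fun u => margFst ρ u * ‖f (e.symm u)‖ ^ p)]
    exact Finset.sum_congr rfl fun u' _ => by rw [hm1, e.symm_apply_apply]
  rw [h1, h2]
  exact h _

variable [Fintype U] [Fintype V] [Fintype X] [Fintype Y]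

lemma margSnd_tensor (ρ : U × V → ℝ) (σ : X × Y → ℝ) (v : V) (y : Y) :
    margSnd (tensor ρ σ) (v, y) = margSnd ρ v * margSnd σ y := by
  unfold margSnd tensor
  rw [Fintype.sum_prod_type, Finset.sum_mul_sum]

lemma margFst_tensor (ρ : U × V → ℝ) (σ : X × Y → ℝ) (u : U) (x : X) :
    margFst (tensor ρ σ) (u, x) = margFst ρ u * margFst σ x := by
  unfold margFst tensor
  rw [Fintype.sum_prod_type, Finset.sum_mul_sum]

lemma condOp_tensor (ρ : U × V → ℝ) (σ : X × Y → ℝ) (f : U × X → ℂ) (v : V) (y : Y) :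
    condOp (tensor ρ σ) f (v, y)
      = condOp ρ (fun u => condOp σ (fun x => f (u, x)) y) v := by
  unfold condOp
  rw [Fintype.sum_prod_type]
  refine Finset.sum_congr rfl fun u _ => ?_
  rw [Finset.mul_sum]
  refine Finset.sum_congr rfl fun x _ => ?_
  rw [margSnd_tensor, ← mul_assoc, ← Complex.ofReal_mul]
  congr 2
  show tensor ρ σ ((u, x), (v, y)) / (margSnd ρ v * margSnd σ y) = _
  unfold tensor
  rw [div_mul_div_comm]


lemma hyper_tensor {q p : ℝ} (hp : 1 ≤ p) (hpq : p ≤ q)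
    (ρ : U × V → ℝ) (σ : X × Y → ℝ) (hρ : ∀ z, 0 ≤ ρ z) (hσ : ∀ z, 0 ≤ σ z)
    (h1 : Hyper ρ q p) (h2 : Hyper σ q p) : Hyper (tensor ρ σ) q p := by
  intro f
  have hp0 : (0:ℝ) < p := lt_of_lt_of_le zero_lt_one hp
  have hq0 : (0:ℝ) < q := lt_of_lt_of_le hp0 hpq
  have hp0' : p ≠ 0 := ne_of_gt hp0
  have hq0' : q ≠ 0 := ne_of_gt hq0
  have hw : ∀ v, 0 ≤ margSnd ρ v := fun v => Finset.sum_nonneg fun u _ => hρ _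
  have hw' : ∀ y, 0 ≤ margSnd σ y := fun y => Finset.sum_nonneg fun x _ => hσ _
  have hm : ∀ u, 0 ≤ margFst ρ u := fun u => Finset.sum_nonneg fun v _ => hρ _
  have hm' : ∀ x, 0 ≤ margFst σ x := fun x => Finset.sum_nonneg fun y _ => hσ _
  set g : U → Y → ℂ := fun u y => condOp σ (fun x => f (u, x)) y with hg
  -- step 1 : hypercontractivity of ρ, raised to the power q
  have step1 : ∀ y : Y, (∑ v, margSnd ρ v * ‖condOp ρ (fun u => g u y) v‖ ^ q)
      ≤ (∑ u, margFst ρ u * ‖g u y‖ ^ p) ^ (q / p) := by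
    intro y
    have hh := h1 (fun u => g u y)
    unfold lnorm at hh
    have hA : (0:ℝ) ≤ ∑ v, margSnd ρ v * ‖condOp ρ (fun u => g u y) v‖ ^ q :=
      Finset.sum_nonneg fun v _ => mul_nonneg (hw v) (by positivity)
    have hB : (0:ℝ) ≤ ∑ u, margFst ρ u * ‖g u y‖ ^ p :=
      Finset.sum_nonneg fun u _ => mul_nonneg (hm u) (by positivity)
    calc (∑ v, margSnd ρ v * ‖condOp ρ (fun u => g u y) v‖ ^ q)
        = ((∑ v, margSnd ρ v * ‖condOp ρ (fun u => g u y) v‖ ^ q) ^ (1/q)) ^ q :=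
          (rpow_inv_rpow hA hq0').symm
      _ ≤ ((∑ u, margFst ρ u * ‖g u y‖ ^ p) ^ (1/p)) ^ q :=
          Real.rpow_le_rpow (by positivity) hh (le_of_lt hq0)
      _ = (∑ u, margFst ρ u * ‖g u y‖ ^ p) ^ (q / p) := by
          rw [← Real.rpow_mul hB]
          congr 1
          field_simp
  -- step 4 : hypercontractivity of σ, raised to the power p
  have step4 : ∀ u : U, (∑ y, margSnd σ y * ‖g u y‖ ^ q) ^ (p / q)
      ≤ ∑ x, margFst σ x * ‖f (u, x)‖ ^ p := by
    intro u
    have hh := h2 (fun x => f (u, x))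
    unfold lnorm at hh
    have hB : (0:ℝ) ≤ ∑ x, margFst σ x * ‖f (u, x)‖ ^ p :=
      Finset.sum_nonneg fun x _ => mul_nonneg (hm' x) (by positivity)
    have hA : (0:ℝ) ≤ ∑ y, margSnd σ y * ‖g u y‖ ^ q :=
      Finset.sum_nonneg fun y _ => mul_nonneg (hw' y) (by positivity)
    calc (∑ y, margSnd σ y * ‖g u y‖ ^ q) ^ (p / q)
        = (((∑ y, margSnd σ y * ‖g u y‖ ^ q) ^ (1/q)) ) ^ p := by
          rw [← Real.rpow_mul hA]
          congr 1
          field_simp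
      _ ≤ ((∑ x, margFst σ x * ‖f (u, x)‖ ^ p) ^ (1/p)) ^ p :=
          Real.rpow_le_rpow (by positivity) hh (le_of_lt hp0)
      _ = ∑ x, margFst σ x * ‖f (u, x)‖ ^ p := rpow_inv_rpow hB hp0'
  set r : ℝ := q / p with hrdef
  have hr1 : 1 ≤ r := (one_le_div hp0).2 hpq
  have hr0 : r ≠ 0 := by positivity
  -- the quantity Z
  set Z : ℝ := ∑ y, margSnd σ y * (∑ u, margFst ρ u * ‖g u y‖ ^ p) ^ r with hZdef
  have hZ0 : 0 ≤ Z := Finset.sum_nonneg fun y _ => mul_nonneg (hw' y)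
    (Real.rpow_nonneg (Finset.sum_nonneg fun u _ => mul_nonneg (hm u) (by positivity)) _)
  -- LHS^q ≤ Z
  have hS : (∑ z : V × Y, margSnd (tensor ρ σ) z
        * ‖condOp (tensor ρ σ) f z‖ ^ q) ≤ Z := by
    rw [Fintype.sum_prod_type_right]
    refine Finset.sum_le_sum fun y _ => ?_
    have : (∑ v, margSnd (tensor ρ σ) (v, y) * ‖condOp (tensor ρ σ) f (v, y)‖ ^ q)
        = margSnd σ y * ∑ v, margSnd ρ v * ‖condOp ρ (fun u => g u y) v‖ ^ q := by
      rw [Finset.mul_sum]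
      refine Finset.sum_congr rfl fun v _ => ?_
      rw [margSnd_tensor, condOp_tensor]
      ring
    rw [this]
    exact mul_le_mul_of_nonneg_left (step1 y) (hw' y)
  have hpr : p * r = q := by rw [hrdef]; field_simp
  -- Minkowski step : Z^(1/r) ≤ ∑_u  m u * (∑_y w' y |g u y|^q)^(p/q)
  have hmink : Z ^ (1/r) ≤ ∑ u, margFst ρ u * (∑ y, margSnd σ y
      * ‖g u y‖ ^ q) ^ (p / q) := by
    have h := minkowski (Finset.univ : Finset U) (margSnd σ) hw'
      (fun u y => margFst ρ u * ‖g u y‖ ^ p)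
      (fun u y => mul_nonneg (hm u) (by positivity)) hr1
    refine le_trans h (le_of_eq (Finset.sum_congr rfl fun u _ => ?_))
    have e1 : ∀ y : Y, margSnd σ y * (margFst ρ u * ‖g u y‖ ^ p) ^ r
        = margFst ρ u ^ r * (margSnd σ y * ‖g u y‖ ^ q) := by
      intro y
      rw [Real.mul_rpow (hm u) (by positivity), ← Real.rpow_mul (by positivity : (0:ℝ) ≤ ‖g u y‖), hpr]
      ring
    rw [Finset.sum_congr rfl fun y _ => e1 y, ← Finset.mul_sum,
      Real.mul_rpow (Real.rpow_nonneg (hm u) r)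
        (Finset.sum_nonneg fun y _ => mul_nonneg (hw' y) (by positivity)),
      rpow_rpow_inv (hm u) hr0, one_div, hrdef, inv_div]
  -- final assembly
  have hN : lnorm (margFst (tensor ρ σ)) p f
      = (∑ u, margFst ρ u * ∑ x, margFst σ x * ‖f (u, x)‖ ^ p) ^ (1/p) := by
    unfold lnorm
    congr 1
    rw [Fintype.sum_prod_type]
    refine Finset.sum_congr rfl fun u _ => ?_
    rw [Finset.mul_sum]
    refine Finset.sum_congr rfl fun x _ => ?_
    rw [margFst_tensor]
    ring
  have hN0 : (0:ℝ) ≤ ∑ u, margFst ρ u * ∑ x, margFst σ x * ‖f (u, x)‖ ^ p :=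
    Finset.sum_nonneg fun u _ => mul_nonneg (hm u)
      (Finset.sum_nonneg fun x _ => mul_nonneg (hm' x) (by positivity))
  have hZN : Z ^ (1/r) ≤ ∑ u, margFst ρ u * ∑ x, margFst σ x * ‖f (u, x)‖ ^ p :=
    le_trans hmink (Finset.sum_le_sum fun u _ =>
      mul_le_mul_of_nonneg_left (step4 u) (hm u))
  have hS0 : (0:ℝ) ≤ ∑ z : V × Y, margSnd (tensor ρ σ) z
      * ‖condOp (tensor ρ σ) f z‖ ^ q :=
    Finset.sum_nonneg fun z _ => mul_nonneg
      (by rw [show z = (z.1, z.2) from rfl, margSnd_tensor]; exact mul_nonneg (hw _) (hw' _))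
      (by positivity)
  have key : lnorm (margSnd (tensor ρ σ)) q (condOp (tensor ρ σ) f)
      ≤ (Z ^ (1/r)) ^ (1/p) := by
    unfold lnorm
    have e : (Z ^ (1/r)) ^ (1/p) = Z ^ (1/q) := by
      rw [← Real.rpow_mul hZ0]
      congr 1
      rw [hrdef]
      field_simp
    rw [e]
    exact Real.rpow_le_rpow hS0 (le_trans hS (le_refl Z)) (by positivity)
  calc lnorm (margSnd (tensor ρ σ)) q (condOp (tensor ρ σ) f)
      ≤ (Z ^ (1/r)) ^ (1/p) := key
    _ ≤ (∑ u, margFst ρ u * ∑ x, margFst σ x * ‖f (u, x)‖ ^ p) ^ (1/p) :=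
        Real.rpow_le_rpow (by positivity) hZN (by positivity)
    _ = lnorm (margFst (tensor ρ σ)) p f := hN.symm


def splitEquiv (β : Type*) (ℓ : ℕ) : (Fin (ℓ+1) → β) ≃ β × (Fin ℓ → β) where
  toFun f := (f 0, Fin.tail f)
  invFun p := Fin.cons p.1 p.2
  left_inv f := Fin.cons_self_tail f
  right_inv p := by simp [Fin.tail_cons]

omit [Fintype U] [Fintype V] in
lemma iid_succ (ρ : U × V → ℝ) (ℓ : ℕ) (z : (Fin (ℓ+1) → U) × (Fin (ℓ+1) → V)) :
    iid ρ (ℓ+1) z = tensor ρ (iid ρ ℓ) (splitEquiv U ℓ z.1, splitEquiv V ℓ z.2) := by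
  unfold iid tensor splitEquiv
  rw [Fin.prod_univ_succ]
  rfl

omit [Fintype U] [Fintype V] in
lemma iid_nonneg (ρ : U × V → ℝ) (hρ : ∀ z, 0 ≤ ρ z) (ℓ : ℕ)
    (z : (Fin ℓ → U) × (Fin ℓ → V)) : 0 ≤ iid ρ ℓ z :=
  Finset.prod_nonneg fun i _ => hρ _

omit [Fintype X] [Fintype Y] in
lemma sum_tensor [Fintype X] [Fintype Y] (ρ : U × V → ℝ) (σ : X × Y → ℝ) :
    ∑ z : (U × X) × (V × Y), tensor ρ σ z = (∑ z : U × V, ρ z) * ∑ z : X × Y, σ z := by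
  rw [← Fintype.sum_equiv (Equiv.prodProdProdComm U V X Y)
    (fun z : (U × V) × (X × Y) => ρ z.1 * σ z.2) (tensor ρ σ) (fun z => rfl),
    Finset.sum_mul_sum, Fintype.sum_prod_type]

lemma sum_iid (ρ : U × V → ℝ) (h1 : ∑ z : U × V, ρ z = 1) :
    ∀ ℓ, ∑ z : (Fin ℓ → U) × (Fin ℓ → V), iid ρ ℓ z = 1 := by
  intro ℓ
  induction ℓ with
  | zero => simp [iid]
  | succ ℓ ih =>
      rw [Finset.sum_congr rfl fun z _ => iid_succ ρ ℓ z]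
      have := Fintype.sum_equiv (Equiv.prodCongr (splitEquiv U ℓ) (splitEquiv V ℓ))
        (fun z : (Fin (ℓ+1) → U) × (Fin (ℓ+1) → V) =>
          tensor ρ (iid ρ ℓ) (splitEquiv U ℓ z.1, splitEquiv V ℓ z.2))
        (tensor ρ (iid ρ ℓ)) (fun z => rfl)
      rw [this, sum_tensor, h1, ih, one_mul]

lemma hyper_iid {q p : ℝ} (hp : 1 ≤ p) (hpq : p ≤ q)
    (ρ : U × V → ℝ) (hρ : ∀ z, 0 ≤ ρ z) (h : Hyper ρ q p) :
    ∀ ℓ, Hyper (iid ρ ℓ) q p := by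
  have hp0 : (0:ℝ) < p := lt_of_lt_of_le zero_lt_one hp
  have hq0 : (0:ℝ) < q := lt_of_lt_of_le hp0 hpq
  intro ℓ
  induction ℓ with
  | zero =>
      intro f
      have hm2 : ∀ v, margSnd (iid ρ 0) v = 1 := by
        intro v; simp [margSnd, iid]
      have hm1 : ∀ u, margFst (iid ρ 0) u = 1 := by
        intro u; simp [margFst, iid]
      have hc : ∀ v, condOp (iid ρ 0) f v = f default := by
        intro v
        unfold condOp
        rw [Fintype.sum_unique]
        rw [hm2]
        simp [iid]
      unfold lnorm
      rw [Fintype.sum_unique, Fintype.sum_unique, hc, hm2, hm1, one_mul, one_mul,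
        rpow_rpow_inv (by positivity) (ne_of_gt hq0),
        rpow_rpow_inv (by positivity) (ne_of_gt hp0)]
  | succ ℓ ih =>
      have ht := hyper_tensor hp hpq ρ (iid ρ ℓ) hρ (iid_nonneg ρ hρ ℓ) h ih
      have hcm := hyper_comap (tensor ρ (iid ρ ℓ)) (splitEquiv U ℓ) (splitEquiv V ℓ) ht
      have he : (fun z : (Fin (ℓ+1) → U) × (Fin (ℓ+1) → V) =>
          tensor ρ (iid ρ ℓ) (splitEquiv U ℓ z.1, splitEquiv V ℓ z.2)) = iid ρ (ℓ+1) := by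
        funext z
        exact (iid_succ ρ ℓ z).symm
      rwa [he] at hcm


lemma pairing {A B : Type*} [Fintype A] [Fintype B] {q p q' : ℝ}
    (hp : 1 ≤ p) (hq : 1 < q) (hq' : q' = q / (q - 1))
    (τ : A × B → ℝ) (hτ : ∀ z, 0 ≤ τ z) (hhyp : Hyper τ q p)
    (F : A → ℝ) (G : B → ℝ) (hF : ∀ a, F a ∈ Set.Icc (0:ℝ) 1) (hG : ∀ b, G b ∈ Set.Icc (0:ℝ) 1) :
    ∑ z : A × B, τ z * (F z.1 * G z.2)
      ≤ (∑ a, margFst τ a * F a) ^ (1/p) * (∑ b, margSnd τ b * G b) ^ (1/q') := by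
  have hp0 : (0:ℝ) < p := lt_of_lt_of_le zero_lt_one hp
  have hq0 : (0:ℝ) < q := lt_trans zero_lt_one hq
  have hq0' : q ≠ 0 := ne_of_gt hq0
  have hq'1 : 1 < q' := by
    rw [hq', lt_div_iff₀ (by linarith)]
    linarith
  have hq'0 : (0:ℝ) < q' := lt_trans zero_lt_one hq'1
  have hconj : q.HolderConjugate q' := by
    rw [Real.holderConjugate_iff]
    constructor
    · exact hq
    · rw [hq', inv_div]
      field_simp
      ring
  have hw : ∀ b, 0 ≤ margSnd τ b := fun b => Finset.sum_nonneg fun a _ => hτ _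
  have hm : ∀ a, 0 ≤ margFst τ a := fun a => Finset.sum_nonneg fun b _ => hτ _
  set R : B → ℝ := fun b => ∑ a, τ (a, b) / margSnd τ b * F a with hRdef
  have hR0 : ∀ b, 0 ≤ R b := fun b => Finset.sum_nonneg fun a _ =>
    mul_nonneg (div_nonneg (hτ _) (hw b)) (hF a).1
  have hwR : ∀ b, margSnd τ b * R b = ∑ a, τ (a, b) * F a := by
    intro b
    by_cases hb : margSnd τ b = 0
    · have hz : ∀ a ∈ Finset.univ, τ (a, b) = 0 :=
        (Finset.sum_eq_zero_iff_of_nonneg (fun a _ => hτ (a, b))).1 hb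
      rw [hb, zero_mul]
      exact (Finset.sum_eq_zero fun a ha => by rw [hz a ha, zero_mul]).symm
    · rw [hRdef, Finset.mul_sum]
      refine Finset.sum_congr rfl fun a _ => ?_
      field_simp
  -- step (i)
  have hstep1 : ∑ z : A × B, τ z * (F z.1 * G z.2)
      = ∑ b, (margSnd τ b * R b) * G b := by
    rw [Fintype.sum_prod_type_right]
    refine Finset.sum_congr rfl fun b _ => ?_
    rw [hwR, Finset.sum_mul]
    exact Finset.sum_congr rfl fun a _ => by ring
  -- step (ii) : Hölder
  have hstep2 : ∑ b, (margSnd τ b * R b) * G b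
      ≤ (∑ b, margSnd τ b * R b ^ q) ^ (1/q) * (∑ b, margSnd τ b * G b ^ q') ^ (1/q') := by
    have he : ∀ b, (margSnd τ b * R b) * G b
        = (margSnd τ b ^ (1/q) * R b) * (margSnd τ b ^ (1/q') * G b) := by
      intro b
      rcases eq_or_lt_of_le (hw b) with hb | hb
      · rw [← hb, Real.zero_rpow (one_div_ne_zero hq0'),
          Real.zero_rpow (one_div_ne_zero (ne_of_gt hq'0))]
        ring
      · have : margSnd τ b ^ (1/q) * margSnd τ b ^ (1/q') = margSnd τ b := by
          rw [← Real.rpow_add hb, one_div, one_div, hconj.inv_add_inv_eq_one, Real.rpow_one]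
        calc (margSnd τ b * R b) * G b
            = (margSnd τ b ^ (1/q) * margSnd τ b ^ (1/q')) * R b * G b := by rw [this]
          _ = (margSnd τ b ^ (1/q) * R b) * (margSnd τ b ^ (1/q') * G b) := by ring
    rw [Finset.sum_congr rfl fun b _ => he b]
    have hH := Real.inner_le_Lp_mul_Lq_of_nonneg (Finset.univ : Finset B)
      (f := fun b => margSnd τ b ^ (1/q) * R b) (g := fun b => margSnd τ b ^ (1/q') * G b)
      hconj
      (fun b _ => mul_nonneg (Real.rpow_nonneg (hw b) _) (hR0 b))
      (fun b _ => mul_nonneg (Real.rpow_nonneg (hw b) _) (hG b).1)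
    refine le_trans hH (le_of_eq ?_)
    rw [Finset.sum_congr rfl fun b _ => wmul_rpow (hw b) (hR0 b) hq0',
      Finset.sum_congr rfl fun b _ => wmul_rpow (hw b) (hG b).1 (ne_of_gt hq'0)]
  -- step (iii) : hypercontractivity
  have hstep3 : (∑ b, margSnd τ b * R b ^ q) ^ (1/q)
      ≤ (∑ a, margFst τ a * F a ^ p) ^ (1/p) := by
    have hh := hhyp (fun a => ((F a : ℝ) : ℂ))
    unfold lnorm at hh
    have hcR : ∀ b, condOp τ (fun a => ((F a : ℝ) : ℂ)) b = ((R b : ℝ) : ℂ) := by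
      intro b
      unfold condOp
      rw [hRdef]
      push_cast
      rfl
    calc (∑ b, margSnd τ b * R b ^ q) ^ (1/q)
        = (∑ b, margSnd τ b * ‖condOp τ (fun a => ((F a : ℝ) : ℂ)) b‖ ^ q) ^ (1/q) := by
          congr 1
          refine Finset.sum_congr rfl fun b _ => ?_
          rw [hcR, Complex.norm_real, Real.norm_of_nonneg (hR0 b)]
      _ ≤ (∑ a, margFst τ a * ‖((F a : ℝ) : ℂ)‖ ^ p) ^ (1/p) := hh
      _ = (∑ a, margFst τ a * F a ^ p) ^ (1/p) := by
          congr 1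
          refine Finset.sum_congr rfl fun a _ => ?_
          rw [Complex.norm_real, Real.norm_of_nonneg (hF a).1]
  -- step (iv) : F^p ≤ F and G^q' ≤ G
  have hstep4 : (∑ a, margFst τ a * F a ^ p) ^ (1/p) ≤ (∑ a, margFst τ a * F a) ^ (1/p) := by
    refine Real.rpow_le_rpow (Finset.sum_nonneg fun a _ =>
      mul_nonneg (hm a) (Real.rpow_nonneg (hF a).1 p)) ?_ (by positivity)
    refine Finset.sum_le_sum fun a _ => mul_le_mul_of_nonneg_left ?_ (hm a)
    calc F a ^ p ≤ F a ^ (1:ℝ) :=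
          Real.rpow_le_rpow_of_exponent_ge' (hF a).1 (hF a).2 zero_le_one hp
      _ = F a := Real.rpow_one _
  have hstep5 : (∑ b, margSnd τ b * G b ^ q') ^ (1/q') ≤ (∑ b, margSnd τ b * G b) ^ (1/q') := by
    refine Real.rpow_le_rpow (Finset.sum_nonneg fun b _ =>
      mul_nonneg (hw b) (Real.rpow_nonneg (hG b).1 q')) ?_ (by positivity)
    refine Finset.sum_le_sum fun b _ => mul_le_mul_of_nonneg_left ?_ (hw b)
    calc G b ^ q' ≤ G b ^ (1:ℝ) :=
          Real.rpow_le_rpow_of_exponent_ge' (hG b).1 (hG b).2 zero_le_one (le_of_lt hq'1)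
      _ = G b := Real.rpow_one _
  calc ∑ z : A × B, τ z * (F z.1 * G z.2)
      = ∑ b, (margSnd τ b * R b) * G b := hstep1
    _ ≤ (∑ b, margSnd τ b * R b ^ q) ^ (1/q) * (∑ b, margSnd τ b * G b ^ q') ^ (1/q') := hstep2
    _ ≤ (∑ a, margFst τ a * F a ^ p) ^ (1/p) * (∑ b, margSnd τ b * G b ^ q') ^ (1/q') := by
        refine mul_le_mul_of_nonneg_right hstep3 (Real.rpow_nonneg ?_ _)
        exact Finset.sum_nonneg fun b _ => mul_nonneg (hw b) (Real.rpow_nonneg (hG b).1 q')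
    _ ≤ (∑ a, margFst τ a * F a) ^ (1/p) * (∑ b, margSnd τ b * G b) ^ (1/q') := by
        refine mul_le_mul (le_trans (le_refl _) hstep4) hstep5 (Real.rpow_nonneg ?_ _)
          (Real.rpow_nonneg ?_ _)
        · exact Finset.sum_nonneg fun b _ => mul_nonneg (hw b) (Real.rpow_nonneg (hG b).1 q')
        · exact Finset.sum_nonneg fun a _ => mul_nonneg (hm a) (hF a).1


lemma colLE_lower {q p q' c : ℝ}
    (hq : 1 < q) (hp : 1 ≤ p) (hpq : p ≤ q)
    (hq' : q' = q / (q - 1)) (hc : 1 / c = 1 / p + 1 / q')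
    (ρ : U × V → ℝ) (hρ : IsDist ρ) (hhyp : Hyper ρ q p)
    (n : ℕ) (hn : 1 ≤ n) (m : ℕ) (hcol : ColLE ρ n (1/(n:ℝ)) m) :
    (p ^ (1/p) * q' ^ (1/q')) ^ c / (2 * c) * (n : ℝ) ^ ((1:ℝ) - c) ≤ (m : ℝ) := by
  obtain ⟨ℓ, sA, sB, μA, μB, A, B, hμA, hμB, hsucc, hA, hB⟩ := hcol
  have hp0 : (0:ℝ) < p := lt_of_lt_of_le zero_lt_one hp
  have hq0 : (0:ℝ) < q := lt_trans zero_lt_one hq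
  have hq'1 : 1 < q' := by
    rw [hq', lt_div_iff₀ (by linarith)]
    linarith
  have hq'0 : (0:ℝ) < q' := lt_trans zero_lt_one hq'1
  have hc0 : (0:ℝ) < c := by
    have : (0:ℝ) < 1 / c := by
      rw [hc]
      positivity
    exact one_div_pos.mp this
  have hcpq : c / p + c / q' = 1 := by
    have h1 : c * (1 / p + 1 / q') = 1 := by
      rw [← hc]
      field_simp
    calc c / p + c / q' = c * (1 / p + 1 / q') := by ring
      _ = 1 := h1
  have hn0 : (0:ℝ) < (n:ℝ) := by exact_mod_cast Nat.lt_of_lt_of_le Nat.zero_lt_one hn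
  set τ := iid ρ ℓ with hτdef
  have hτ : ∀ z, 0 ≤ τ z := iid_nonneg ρ hρ.1 ℓ
  have hτ1 : ∑ z, τ z = 1 := sum_iid ρ hρ.2 ℓ
  have hτhyp : Hyper τ q p := hyper_iid hp hpq ρ hρ.1 hhyp ℓ
  set F : Fin n → (Fin ℓ → U) → ℝ :=
    fun i u => ∑ rA, μA rA * (if i ∈ A u rA then (1:ℝ) else 0) with hFdef
  set G : Fin n → (Fin ℓ → V) → ℝ :=
    fun i v => ∑ rB, μB rB * (if i ∈ B v rB then (1:ℝ) else 0) with hGdef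
  have hF : ∀ i u, F i u ∈ Set.Icc (0:ℝ) 1 := by
    intro i u
    constructor
    · exact Finset.sum_nonneg fun rA _ => mul_nonneg (hμA.1 rA) (by positivity)
    · calc F i u ≤ ∑ rA, μA rA := Finset.sum_le_sum fun rA _ => by
            rcases ite_eq_or_eq (i ∈ A u rA) (1:ℝ) 0 with h | h <;> rw [h] <;>
              simp [hμA.1 rA]
        _ = 1 := hμA.2
  have hG : ∀ i v, G i v ∈ Set.Icc (0:ℝ) 1 := by
    intro i v
    constructor
    · exact Finset.sum_nonneg fun rB _ => mul_nonneg (hμB.1 rB) (by positivity)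
    · calc G i v ≤ ∑ rB, μB rB := Finset.sum_le_sum fun rB _ => by
            rcases ite_eq_or_eq (i ∈ B v rB) (1:ℝ) 0 with h | h <;> rw [h] <;>
              simp [hμB.1 rB]
        _ = 1 := hμB.2
  -- rewrite the success probability
  have hprob : ∀ i : Fin n, 1/(n:ℝ) ≤ ∑ z, τ z * (F i z.1 * G i z.2) := by
    intro i
    refine le_trans (hsucc i) (le_of_eq ?_)
    refine Finset.sum_congr rfl fun z _ => ?_
    have : ∀ rA rB, τ z * (μA rA * μB rB)
          * (if i ∈ A z.1 rA ∧ i ∈ B z.2 rB then (1:ℝ) else 0)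
        = τ z * ((μA rA * (if i ∈ A z.1 rA then (1:ℝ) else 0))
            * (μB rB * (if i ∈ B z.2 rB then (1:ℝ) else 0))) := by
      intro rA rB
      by_cases h1 : i ∈ A z.1 rA <;> by_cases h2 : i ∈ B z.2 rB <;>
        simp [h1, h2] <;> ring
    rw [Finset.sum_congr rfl fun rA _ => Finset.sum_congr rfl fun rB _ => this rA rB]
    rw [hFdef, hGdef]
    rw [Finset.sum_mul_sum, Finset.mul_sum]
    exact Finset.sum_congr rfl fun rA _ => by rw [Finset.mul_sum]
  set a : Fin n → ℝ := fun i => ∑ u, margFst τ u * F i u with hadef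
  set b : Fin n → ℝ := fun i => ∑ v, margSnd τ v * G i v with hbdef
  have ha0 : ∀ i, 0 ≤ a i := fun i => Finset.sum_nonneg fun u _ =>
    mul_nonneg (Finset.sum_nonneg fun v _ => hτ _) (hF i u).1
  have hb0 : ∀ i, 0 ≤ b i := fun i => Finset.sum_nonneg fun v _ =>
    mul_nonneg (Finset.sum_nonneg fun u _ => hτ _) (hG i v).1
  have hkey : ∀ i : Fin n, 1/(n:ℝ) ≤ a i ^ (1/p) * b i ^ (1/q') := fun i =>
    le_trans (hprob i) (pairing hp hq hq' τ hτ hτhyp (F i) (G i) (hF i) (hG i))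
  -- the AM-GM step
  set K : ℝ := (p ^ (1/p) * q' ^ (1/q')) ^ c with hKdef
  have hK : K = p ^ (c/p) * q' ^ (c/q') := by
    rw [hKdef, Real.mul_rpow (Real.rpow_nonneg (le_of_lt hp0) _)
      (Real.rpow_nonneg (le_of_lt hq'0) _), ← Real.rpow_mul (le_of_lt hp0),
      ← Real.rpow_mul (le_of_lt hq'0)]
    congr 1 <;> ring_nf
  have hK0 : 0 ≤ K := Real.rpow_nonneg (by positivity) _
  have hgm : ∀ i : Fin n, K * (1/(n:ℝ)) ^ c ≤ c * (a i + b i) := by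
    intro i
    have h1 : (1/(n:ℝ)) ^ c ≤ a i ^ (c/p) * b i ^ (c/q') := by
      calc (1/(n:ℝ)) ^ c ≤ (a i ^ (1/p) * b i ^ (1/q')) ^ c :=
            Real.rpow_le_rpow (by positivity) (hkey i) (le_of_lt hc0)
        _ = a i ^ (c/p) * b i ^ (c/q') := by
            rw [Real.mul_rpow (Real.rpow_nonneg (ha0 i) _) (Real.rpow_nonneg (hb0 i) _),
              ← Real.rpow_mul (ha0 i), ← Real.rpow_mul (hb0 i)]
            congr 1 <;> congr 1 <;> ring
    have h2 : (p * a i) ^ (c/p) * (q' * b i) ^ (c/q')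
        ≤ (c/p) * (p * a i) + (c/q') * (q' * b i) :=
      Real.geom_mean_le_arith_mean2_weighted (by positivity) (by positivity)
        (mul_nonneg (le_of_lt hp0) (ha0 i)) (mul_nonneg (le_of_lt hq'0) (hb0 i)) hcpq
    have h3 : (p * a i) ^ (c/p) * (q' * b i) ^ (c/q')
        = K * (a i ^ (c/p) * b i ^ (c/q')) := by
      rw [Real.mul_rpow (le_of_lt hp0) (ha0 i), Real.mul_rpow (le_of_lt hq'0) (hb0 i), hK]
      ring
    have h4 : (c/p) * (p * a i) + (c/q') * (q' * b i) = c * (a i + b i) := by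
      field_simp
    calc K * (1/(n:ℝ)) ^ c ≤ K * (a i ^ (c/p) * b i ^ (c/q')) :=
          mul_le_mul_of_nonneg_left h1 hK0
      _ = (p * a i) ^ (c/p) * (q' * b i) ^ (c/q') := h3.symm
      _ ≤ (c/p) * (p * a i) + (c/q') * (q' * b i) := h2
      _ = c * (a i + b i) := h4
  -- sum bounds
  have hmargsum : ∑ u, margFst τ u = 1 := by
    rw [← hτ1, Fintype.sum_prod_type]
    rfl
  have hmargsum' : ∑ v, margSnd τ v = 1 := by
    rw [← hτ1, Fintype.sum_prod_type_right]
    rfl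
  have hsa : ∑ i, a i ≤ (m : ℝ) := by
    have swap : ∑ i, a i = ∑ u, ∑ rA, margFst τ u * (μA rA * ((A u rA).card : ℝ)) := by
      rw [Finset.sum_comm]
      refine Finset.sum_congr rfl fun u _ => ?_
      rw [← Finset.mul_sum, hFdef]
      rw [Finset.sum_comm]
      rw [Finset.mul_sum]
      refine Finset.sum_congr rfl fun rA _ => ?_
      rw [← Finset.mul_sum, Finset.sum_boole, Finset.filter_mem_eq_inter, Finset.univ_inter]
    rw [swap]
    have hterm : ∀ u rA, margFst τ u * (μA rA * ((A u rA).card : ℝ))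
        ≤ margFst τ u * (μA rA * (m : ℝ)) := by
      intro u rA
      rcases eq_or_lt_of_le (Finset.sum_nonneg fun v _ => hτ (u, v)) with h0 | h0
      · rw [show margFst τ u = 0 from h0.symm]
        simp
      · rcases eq_or_lt_of_le (hμA.1 rA) with h1 | h1
        · rw [← h1]
          simp
        · have : ∃ v, 0 < τ (u, v) := by
            by_contra hcon
            push_neg at hcon
            have : (∑ v, τ (u, v)) ≤ 0 := Finset.sum_nonpos fun v _ => hcon v
            linarith
          obtain ⟨v, hv⟩ := this
          have hcard := hA (u, v) rA hv h1
          refine mul_le_mul_of_nonneg_left (mul_le_mul_of_nonneg_left ?_ (hμA.1 rA))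
            (le_of_lt h0)
          exact_mod_cast hcard
    calc ∑ u, ∑ rA, margFst τ u * (μA rA * ((A u rA).card : ℝ))
        ≤ ∑ u, ∑ rA, margFst τ u * (μA rA * (m : ℝ)) :=
          Finset.sum_le_sum fun u _ => Finset.sum_le_sum fun rA _ => hterm u rA
      _ = (m : ℝ) := by
          rw [Finset.sum_congr rfl fun u _ => by
            rw [← Finset.mul_sum, ← Finset.sum_mul, hμA.2, one_mul]]
          rw [← Finset.sum_mul, hmargsum, one_mul]
  have hsb : ∑ i, b i ≤ (m : ℝ) := by
    have swap : ∑ i, b i = ∑ v, ∑ rB, margSnd τ v * (μB rB * ((B v rB).card : ℝ)) := by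
      rw [Finset.sum_comm]
      refine Finset.sum_congr rfl fun v _ => ?_
      rw [← Finset.mul_sum, hGdef]
      rw [Finset.sum_comm]
      rw [Finset.mul_sum]
      refine Finset.sum_congr rfl fun rB _ => ?_
      rw [← Finset.mul_sum, Finset.sum_boole, Finset.filter_mem_eq_inter, Finset.univ_inter]
    rw [swap]
    have hterm : ∀ v rB, margSnd τ v * (μB rB * ((B v rB).card : ℝ))
        ≤ margSnd τ v * (μB rB * (m : ℝ)) := by
      intro v rB
      rcases eq_or_lt_of_le (Finset.sum_nonneg fun u _ => hτ (u, v)) with h0 | h0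
      · rw [show margSnd τ v = 0 from h0.symm]
        simp
      · rcases eq_or_lt_of_le (hμB.1 rB) with h1 | h1
        · rw [← h1]
          simp
        · have : ∃ u, 0 < τ (u, v) := by
            by_contra hcon
            push_neg at hcon
            have : (∑ u, τ (u, v)) ≤ 0 := Finset.sum_nonpos fun u _ => hcon u
            linarith
          obtain ⟨u, hu⟩ := this
          have hcard := hB (u, v) rB hu h1
          refine mul_le_mul_of_nonneg_left (mul_le_mul_of_nonneg_left ?_ (hμB.1 rB))
            (le_of_lt h0)
          exact_mod_cast hcard
    calc ∑ v, ∑ rB, margSnd τ v * (μB rB * ((B v rB).card : ℝ))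
        ≤ ∑ v, ∑ rB, margSnd τ v * (μB rB * (m : ℝ)) :=
          Finset.sum_le_sum fun v _ => Finset.sum_le_sum fun rB _ => hterm v rB
      _ = (m : ℝ) := by
          rw [Finset.sum_congr rfl fun v _ => by
            rw [← Finset.mul_sum, ← Finset.sum_mul, hμB.2, one_mul]]
          rw [← Finset.sum_mul, hmargsum', one_mul]
  -- summing the AM-GM bound
  have hsumgm : (n : ℝ) * (K * (1/(n:ℝ)) ^ c) ≤ c * (2 * (m:ℝ)) := by
    calc (n : ℝ) * (K * (1/(n:ℝ)) ^ c)
        = ∑ _i : Fin n, K * (1/(n:ℝ)) ^ c := by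
          rw [Finset.sum_const, Finset.card_univ, Fintype.card_fin, nsmul_eq_mul]
      _ ≤ ∑ i, c * (a i + b i) := Finset.sum_le_sum fun i _ => hgm i
      _ = c * (∑ i, a i + ∑ i, b i) := by
          rw [← Finset.mul_sum, Finset.sum_add_distrib]
      _ ≤ c * (2 * (m:ℝ)) := by
          refine mul_le_mul_of_nonneg_left ?_ (le_of_lt hc0)
          linarith
  have hpow : (n : ℝ) ^ ((1:ℝ) - c) = (n : ℝ) * (1/(n:ℝ)) ^ c := by
    rw [Real.rpow_sub hn0, Real.rpow_one, one_div, Real.inv_rpow (le_of_lt hn0), div_eq_mul_inv]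
  rw [div_mul_eq_mul_div, div_le_iff₀ (by positivity)]
  calc K * (n : ℝ) ^ ((1:ℝ) - c) = (n : ℝ) * (K * (1/(n:ℝ)) ^ c) := by
        rw [hpow]
        ring
    _ ≤ c * (2 * (m:ℝ)) := hsumgm
    _ = (m : ℝ) * (2 * c) := by ring


end AuxLemmas

theorem stmt16 {U V : Type} [Fintype U] [Fintype V] [Nonempty U] [Nonempty V]
    (q p : ℝ) (hq : 1 < q) (hp : 1 ≤ p) (hpq : p ≤ q)
    (q' c : ℝ) (hq' : q' = q / (q - 1)) (hc : 1 / c = 1 / p + 1 / q')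
    (ρ : U × V → ℝ) (hρ : IsDist ρ) (hhyp : Hyper ρ q p)
    (n : ℕ) (hn : 1 ≤ n) :
    ENNReal.ofReal ((p ^ (1/p) * q' ^ (1/q')) ^ c / (2 * c) * (n : ℝ) ^ (1 - c))
      ≤ ((col ρ n (1/(n:ℝ)) : ℕ∞) : ℝ≥0∞) := by
  set Bd : ℝ := (p ^ (1/p) * q' ^ (1/q')) ^ c / (2 * c) * (n : ℝ) ^ (1 - c) with hBd
  have hbound : ∀ m : ℕ, ColLE ρ n (1/(n:ℝ)) m → Bd ≤ (m : ℝ) := fun m hm =>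
    colLE_lower hq hp hpq hq' hc ρ hρ hhyp n hn m hm
  have h1 : ((⌈Bd⌉₊ : ℕ∞)) ≤ col ρ n (1/(n:ℝ)) := by
    refine le_sInf ?_
    rintro k ⟨m, rfl, hm⟩
    exact_mod_cast Nat.ceil_le.mpr (hbound m hm)
  calc ENNReal.ofReal Bd ≤ ENNReal.ofReal ((⌈Bd⌉₊ : ℝ)) :=
        ENNReal.ofReal_le_ofReal (Nat.le_ceil Bd)
    _ = ((⌈Bd⌉₊ : ℕ) : ℝ≥0∞) := ENNReal.ofReal_natCast _
    _ = (((⌈Bd⌉₊ : ℕ∞)) : ℝ≥0∞) := (ENat.toENNReal_coe _).symm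
    _ ≤ ((col ρ n (1/(n:ℝ)) : ℕ∞) : ℝ≥0∞) := ENat.toENNReal_le.mpr h1


end SR
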